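/- arXiv:2508.06857 — 2 statements merged into one kernel-verified Lean document; each statement's English description precedes it below -/
import Mathlib

section
/- For a vector z in R^n and positive integer k ≤ n, the vector y* defined by y*_i = max(0, z_i) for i among the indices of the k largest entries of z, and y*_i = 0 otherwise, is a minimizer of ‖y − z‖₂² over the set {y ∈ R^n : ‖y‖₀ ≤ k, y ≥ 0}. -/
/-- Number of nonzero entries of a vector. -/
noncomputable def card0 {n : ℕ} (y : Fin n → ℝ) : ℕ :=
  (Finset.univ.filter fun i => y i ≠ 0).card

lemma topk_sum {n : ℕ} (f : Fin n → ℝ) (hf : ∀ i, 0 ≤ f i)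
    (I S : Finset (Fin n)) (hc : S.card ≤ I.card)
    (htop : ∀ i ∈ I, ∀ j ∉ I, f j ≤ f i) :
    ∑ i ∈ S, f i ≤ ∑ i ∈ I, f i := by
  have hS : ∑ i ∈ S ∩ I, f i + ∑ i ∈ S \ I, f i = ∑ i ∈ S, f i :=
    Finset.sum_inter_add_sum_sdiff S I f
  have hI2 : ∑ i ∈ I ∩ S, f i + ∑ i ∈ I \ S, f i = ∑ i ∈ I, f i :=
    Finset.sum_inter_add_sum_sdiff I S f
  have hcard : (S \ I).card ≤ (I \ S).card := by
    have h1 : (S \ I).card + (S ∩ I).card = S.card := Finset.card_sdiff_add_card_inter S I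
    have h2 : (I \ S).card + (I ∩ S).card = I.card := Finset.card_sdiff_add_card_inter I S
    rw [Finset.inter_comm] at h2
    omega
  have hinter : S ∩ I = I ∩ S := Finset.inter_comm S I
  rw [← hS, ← hI2, hinter]
  refine add_le_add_right ?_ _
  by_cases h : (I \ S).Nonempty
  · obtain ⟨m, hmIS, hmin⟩ := Finset.exists_min_image (I \ S) f h
    have hmI : m ∈ I := (Finset.mem_sdiff.mp hmIS).1
    calc ∑ i ∈ S \ I, f i ≤ (S \ I).card • f m := by
          apply Finset.sum_le_card_nsmul
          intro j hj
          exact htop m hmI j (Finset.mem_sdiff.mp hj).2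
      _ ≤ (I \ S).card • f m := by
          rw [nsmul_eq_mul, nsmul_eq_mul]
          exact mul_le_mul_of_nonneg_right (Nat.cast_le.mpr hcard) (hf m)
      _ ≤ ∑ i ∈ I \ S, f i := Finset.card_nsmul_le_sum _ _ _ hmin
  · have : (S \ I).card = 0 := by
      rw [Finset.not_nonempty_iff_eq_empty] at h
      have := Finset.card_eq_zero.mpr h
      omega
    rw [Finset.card_eq_zero.mp this, Finset.sum_empty]
    exact Finset.sum_nonneg fun i _ => hf i

theorem hard_thresholding_projection {n k : ℕ} (hk : 0 < k) (hkn : k ≤ n)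
    (z : Fin n → ℝ) (I : Finset (Fin n)) (hI : I.card = k)
    (htop : ∀ i ∈ I, ∀ j ∉ I, z j ≤ z i)
    (ystar : Fin n → ℝ)
    (hy : ∀ i, ystar i = if i ∈ I then max 0 (z i) else 0) :
    (card0 ystar ≤ k ∧ ∀ i, 0 ≤ ystar i) ∧
      ∀ y : Fin n → ℝ, card0 y ≤ k → (∀ i, 0 ≤ y i) →
        ∑ i, (ystar i - z i) ^ 2 ≤ ∑ i, (y i - z i) ^ 2 := by
  constructor
  · constructor
    · unfold card0
      calc (Finset.univ.filter fun i => ystar i ≠ 0).card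
          ≤ I.card := Finset.card_le_card (by
            intro i hi
            simp only [Finset.mem_filter] at hi
            by_contra h
            exact hi.2 (by rw [hy i, if_neg h]))
        _ = k := hI
    · intro i; rw [hy i]; split <;> simp [le_max_left]
  · intro y hy0 hypos
    set f : Fin n → ℝ := fun i => (max 0 (z i)) ^ 2 with hfdef
    set c : Fin n → ℝ := fun i => (max 0 (z i) - z i) ^ 2 with hcdef
    have hfc : ∀ i, c i = z i ^ 2 - f i := by
      intro i
      rcases le_total (z i) 0 with h | h
      · simp only [hfdef, hcdef, max_eq_left h]; ring
      · simp only [hfdef, hcdef, max_eq_right h]; ring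
    have hfnn : ∀ i, 0 ≤ f i := fun i => sq_nonneg _
    set S : Finset (Fin n) := Finset.univ.filter fun i => y i ≠ 0 with hSdef
    have hSk : S.card ≤ I.card := by rw [hI]; exact hy0
    -- sum for ystar
    have h1 : ∑ i, (ystar i - z i) ^ 2 = ∑ i ∈ I, c i + ∑ i ∈ Finset.univ \ I, z i ^ 2 := by
      rw [← Finset.sum_inter_add_sum_sdiff Finset.univ I, Finset.univ_inter]
      congr 1
      · exact Finset.sum_congr rfl fun i hi => by rw [hy i, if_pos hi]
      · refine Finset.sum_congr rfl fun i hi => ?_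
        rw [hy i, if_neg (Finset.mem_sdiff.mp hi).2]; ring
    -- sum for y
    have h2 : ∑ i ∈ S, c i + ∑ i ∈ Finset.univ \ S, z i ^ 2 ≤ ∑ i, (y i - z i) ^ 2 := by
      rw [← Finset.sum_inter_add_sum_sdiff Finset.univ S, Finset.univ_inter]
      refine add_le_add (Finset.sum_le_sum fun i _ => ?_)
        (le_of_eq (Finset.sum_congr rfl fun i hi => ?_))
      · rcases le_total (z i) 0 with h | h
        · simp only [hcdef, max_eq_left h]
          nlinarith [hypos i]
        · simp only [hcdef, max_eq_right h]
          nlinarith [sq_nonneg (y i - z i)]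
      · have hyi : y i = 0 := by
          have := (Finset.mem_sdiff.mp hi).2
          simpa [hSdef] using this
        rw [hyi]; ring
    have key : ∑ i ∈ S, f i ≤ ∑ i ∈ I, f i := by
      apply topk_sum f hfnn I S hSk
      intro i hi j hj
      have hz := htop i hi j hj
      simp only [hfdef]
      have : max 0 (z j) ≤ max 0 (z i) := max_le_max le_rfl hz
      exact pow_le_pow_left₀ (le_max_left _ _) this 2
    have expand : ∀ T : Finset (Fin n),
        ∑ i ∈ T, c i + ∑ i ∈ Finset.univ \ T, z i ^ 2
          = ∑ i, z i ^ 2 - ∑ i ∈ T, f i := by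
      intro T
      have : ∑ i ∈ Finset.univ \ T, z i ^ 2 = ∑ i, z i ^ 2 - ∑ i ∈ T, z i ^ 2 :=
        Finset.sum_sdiff_eq_sub (Finset.subset_univ T)
      rw [this]
      have : ∑ i ∈ T, c i = ∑ i ∈ T, z i ^ 2 - ∑ i ∈ T, f i := by
        rw [← Finset.sum_sub_distrib]
        exact Finset.sum_congr rfl fun i _ => hfc i
      rw [this]; ring
    rw [h1, expand I]
    calc ∑ i, z i ^ 2 - ∑ i ∈ I, f i ≤ ∑ i, z i ^ 2 - ∑ i ∈ S, f i := by linarith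
      _ = ∑ i ∈ S, c i + ∑ i ∈ Finset.univ \ S, z i ^ 2 := (expand S).symm
      _ ≤ _ := h2
end

section
/- (Eckart–Young for Frobenius norm) Let W ∈ R^{n×n} have singular value decomposition W = U Σ Vᵀ with singular values σ₁ ≥ σ₂ ≥ … ≥ σ_n ≥ 0, and let k ≤ n. Then the truncated SVD matrix C* = U Σ_k Vᵀ, where Σ_k keeps the first k singular values and sets the rest to zero, minimizes ‖C − W‖_F² over all matrices C with rank(C) ≤ k, and the minimal value is Σ_{i>k} σ_i². -/
open Matrix Finset Module

def frobSq {n : ℕ} (M : Matrix (Fin n) (Fin n) ℝ) : ℝ :=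
  ∑ i, ∑ j, (M i j) ^ 2

lemma card_filter_lt {n k : ℕ} (hk : k ≤ n) :
    (univ.filter fun i : Fin n => (i : ℕ) < k).card = k := by
  have : (univ.filter fun i : Fin n => (i : ℕ) < k) = univ.map (Fin.castLEEmb hk) := by
    ext i
    simp only [mem_filter, mem_univ, true_and, mem_map, Fin.castLEEmb_apply]
    constructor
    · intro h; exact ⟨⟨i, h⟩, rfl⟩
    · rintro ⟨j, rfl⟩; exact j.2
  rw [this, card_map, card_univ, Fintype.card_fin]

lemma card_filter_le {n k : ℕ} (hk : k ≤ n) :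
    (univ.filter fun i : Fin n => k ≤ (i : ℕ)).card = n - k := by
  have h2 := Finset.card_filter_add_card_filter_not
    (s := (univ : Finset (Fin n))) (p := fun i : Fin n => (i : ℕ) < k)
  simp only [not_lt, card_univ, Fintype.card_fin, card_filter_lt hk] at h2
  omega

lemma frobSq_eq_trace {n : ℕ} (M : Matrix (Fin n) (Fin n) ℝ) :
    frobSq M = (Mᵀ * M).trace := by
  simp only [frobSq, Matrix.trace, Matrix.diag, Matrix.mul_apply, Matrix.transpose_apply, pow_two]
  exact Finset.sum_comm

lemma frobSq_conj {n : ℕ} (U V : Matrix (Fin n) (Fin n) ℝ)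
    (hU : U * U.transpose = 1) (hV : V * V.transpose = 1)
    (M : Matrix (Fin n) (Fin n) ℝ) : frobSq (U * M * Vᵀ) = frobSq M := by
  have hU' : Uᵀ * U = 1 := mul_eq_one_comm.mp hU
  rw [frobSq_eq_trace, frobSq_eq_trace]
  simp only [Matrix.transpose_mul, Matrix.transpose_transpose, Matrix.mul_assoc]
  rw [← Matrix.mul_assoc Uᵀ U, hU', Matrix.one_mul]
  rw [Matrix.trace_mul_comm V, Matrix.mul_assoc, Matrix.mul_assoc,
    mul_eq_one_comm.mp hV, Matrix.mul_one]

lemma majorize {n k : ℕ} (hk : k ≤ n) (σ t : Fin n → ℝ)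
    (hnn : ∀ i, 0 ≤ σ i) (hmono : ∀ i j : Fin n, i ≤ j → σ j ≤ σ i)
    (ht0 : ∀ i, 0 ≤ t i) (ht1 : ∀ i, t i ≤ 1) (hsum : (n : ℝ) - k ≤ ∑ i, t i) :
    (∑ i : Fin n, if k ≤ (i : ℕ) then σ i ^ 2 else 0) ≤ ∑ i, σ i ^ 2 * t i := by
  rcases eq_or_lt_of_le hk with rfl | hkn
  · refine le_trans (le_of_eq (Finset.sum_eq_zero fun i _ => if_neg (not_le.mpr i.2)))
      (Finset.sum_nonneg fun i _ => mul_nonneg (sq_nonneg _) (ht0 i))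
  · set c : ℝ := σ ⟨k, hkn⟩ ^ 2 with hc
    have hc0 : 0 ≤ c := sq_nonneg _
    have key : ∀ i : Fin n,
        c * t i - (if k ≤ (i : ℕ) then c else 0) ≤
        σ i ^ 2 * t i - (if k ≤ (i : ℕ) then σ i ^ 2 else 0) := by
      intro i
      by_cases h : k ≤ (i : ℕ)
      · have hσc : σ i ^ 2 ≤ c := by
          have := hmono ⟨k, hkn⟩ i (by simpa [Fin.le_def] using h)
          exact pow_le_pow_left₀ (hnn i) this 2
        simp only [h, if_true]
        nlinarith [ht1 i]
      · have hσc : c ≤ σ i ^ 2 := by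
          have := hmono i ⟨k, hkn⟩ (by simp [Fin.le_def]; omega)
          exact pow_le_pow_left₀ (hnn _) this 2
        simp only [h, if_false, sub_zero]
        exact mul_le_mul_of_nonneg_right hσc (ht0 i)
    have hsumkey := Finset.sum_le_sum (fun i (_ : i ∈ univ) => key i)
    rw [Finset.sum_sub_distrib, Finset.sum_sub_distrib] at hsumkey
    have hif : (∑ i : Fin n, if k ≤ (i : ℕ) then c else 0) = c * ((n : ℝ) - k) := by
      rw [← Finset.sum_filter, Finset.sum_const, card_filter_le hk, nsmul_eq_mul,
        Nat.cast_sub hk, mul_comm]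
    have hct : c * ((n : ℝ) - k) ≤ c * ∑ i, t i := mul_le_mul_of_nonneg_left hsum hc0
    rw [hif, ← Finset.mul_sum] at hsumkey
    linarith


local notation "⟪" x ", " y "⟫" => @inner ℝ _ _ x y

-- norm of projection in terms of orthonormal basis coefficients
lemma proj_norm_sq {n : ℕ} (S : Submodule ℝ (EuclideanSpace ℝ (Fin n)))
    (y : EuclideanSpace ℝ (Fin n)) :
    ‖(S.orthogonalProjectionOnto y : EuclideanSpace ℝ (Fin n))‖ ^ 2 =
      ∑ i, (⟪((stdOrthonormalBasis ℝ S i : S) : EuclideanSpace ℝ (Fin n)), y⟫ : ℝ) ^ 2 := by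
  set b := stdOrthonormalBasis ℝ S
  have hbo : Orthonormal ℝ (fun i => ((b i : S) : EuclideanSpace ℝ (Fin n))) :=
    b.orthonormal.comp_linearIsometry S.subtypeₗᵢ
  have hrep := b.orthogonalProjectionOnto_apply_eq_sum y
  have hcoe : (S.orthogonalProjectionOnto y : EuclideanSpace ℝ (Fin n)) =
      ∑ i, (⟪((b i : S) : EuclideanSpace ℝ (Fin n)), y⟫ : ℝ) • ((b i : S) : EuclideanSpace ℝ (Fin n)) := by
    rw [hrep]; push_cast [Submodule.coe_sum]; rfl
  rw [hcoe, ← real_inner_self_eq_norm_sq]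
  rw [hbo.inner_sum _ _ univ]
  simp [pow_two]

lemma core_lemma {n k : ℕ} (hk : k ≤ n) (σ : Fin n → ℝ)
    (hnn : ∀ i, 0 ≤ σ i) (hmono : ∀ i j : Fin n, i ≤ j → σ j ≤ σ i)
    (B : Matrix (Fin n) (Fin n) ℝ) (hB : B.rank ≤ k) :
    (∑ i : Fin n, if k ≤ (i : ℕ) then σ i ^ 2 else 0) ≤
      ∑ j, ∑ i, (B i j - Matrix.diagonal σ i j) ^ 2 := by
  classical
  set col : Fin n → EuclideanSpace ℝ (Fin n) :=
    fun j => WithLp.toLp 2 (fun i => B i j) with hcol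
  set Scol : Submodule ℝ (EuclideanSpace ℝ (Fin n)) := Submodule.span ℝ (Set.range col) with hScol
  have hrank : B.rank = finrank ℝ Scol := by
    rw [Matrix.rank_eq_finrank_span_cols, hScol]
    have : Submodule.span ℝ (Set.range col) = (Submodule.span ℝ (Set.range B.col)).map (WithLp.linearEquiv 2 ℝ (Fin n → ℝ)).symm.toLinearMap := by
      rw [Submodule.map_span, ← Set.range_comp]; rfl
    rw [this, LinearEquiv.finrank_map_eq]
  set S : Submodule ℝ (EuclideanSpace ℝ (Fin n)) := Scolᗮ with hS
  have hdim : finrank ℝ Scol + finrank ℝ S = n := by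
    simpa using Submodule.finrank_add_finrank_orthogonal Scol
  set b := stdOrthonormalBasis ℝ S with hb
  have hbo : Orthonormal ℝ (fun i => ((b i : S) : EuclideanSpace ℝ (Fin n))) :=
    b.orthonormal.comp_linearIsometry S.subtypeₗᵢ
  set e : Fin n → EuclideanSpace ℝ (Fin n) := fun j => EuclideanSpace.single j (1 : ℝ) with he
  set t : Fin n → ℝ := fun j =>
    ‖(S.orthogonalProjectionOnto (e j) : EuclideanSpace ℝ (Fin n))‖ ^ 2 with ht
  have ht0 : ∀ j, 0 ≤ t j := fun j => sq_nonneg _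
  have ht1 : ∀ j, t j ≤ 1 := by
    intro j
    show ‖(S.orthogonalProjectionOnto (e j) : EuclideanSpace ℝ (Fin n))‖ ^ 2 ≤ 1
    rw [proj_norm_sq]
    have hbess := hbo.sum_inner_products_le (𝕜 := ℝ) (e j) (s := univ)
    simp only [Real.norm_eq_abs, sq_abs] at hbess
    calc (∑ i, (⟪((b i : S) : EuclideanSpace ℝ (Fin n)), e j⟫ : ℝ) ^ 2) ≤ ‖e j‖ ^ 2 := hbess
      _ = 1 := by rw [he, EuclideanSpace.norm_single]; norm_num
  have hinner : ∀ (i) (j : Fin n), (⟪((b i : S) : EuclideanSpace ℝ (Fin n)), e j⟫ : ℝ) = ((b i : S) : EuclideanSpace ℝ (Fin n)) j := by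
    intro i j
    rw [he]
    simp [EuclideanSpace.inner_single_right]
  have hsum : (∑ j, t j) = (finrank ℝ S : ℝ) := by
    simp only [ht]
    simp only [proj_norm_sq, hinner]
    rw [Finset.sum_comm]
    have : ∀ i, (∑ j : Fin n, (((b i : S) : EuclideanSpace ℝ (Fin n)) j) ^ 2) = 1 := by
      intro i
      have h1 : (⟪((b i : S) : EuclideanSpace ℝ (Fin n)), ((b i : S) : EuclideanSpace ℝ (Fin n))⟫ : ℝ) = 1 := by
        rw [real_inner_self_eq_norm_sq, hbo.1 i, one_pow]
      rw [← h1, PiLp.inner_apply]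
      simp [pow_two]
    simp [← hb, hinner, this]
  have hcolbound : ∀ j, σ j ^ 2 * t j ≤ ∑ i, (B i j - Matrix.diagonal σ i j) ^ 2 := by
    intro j
    set x : EuclideanSpace ℝ (Fin n) := WithLp.toLp 2 (fun i => B i j - Matrix.diagonal σ i j) with hx
    have hxeq : x = col j - σ j • e j := by
      ext i
      rw [hx, hcol, he]
      simp only [PiLp.sub_apply, PiLp.smul_apply, PiLp.toLp_apply, EuclideanSpace.single_apply, smul_eq_mul]
      by_cases h : i = j <;> simp [Matrix.diagonal, h]
    have hPcol : S.orthogonalProjectionOnto (col j) = 0 :=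
      Submodule.orthogonalProjectionOnto_eq_zero_iff.mpr
        ((Submodule.le_orthogonal_orthogonal Scol) (Submodule.subset_span ⟨j, rfl⟩))
    have hPx : S.orthogonalProjectionOnto x = (-(σ j)) • S.orthogonalProjectionOnto (e j) := by
      rw [hxeq, map_sub, hPcol, _root_.map_smul, zero_sub, neg_smul]
    have hnormP : ‖(S.orthogonalProjectionOnto x : EuclideanSpace ℝ (Fin n))‖ ^ 2 = σ j ^ 2 * t j := by
      rw [hPx, ht]
      push_cast
      rw [norm_smul]
      simp [mul_pow, sq_abs]
    have hle : ‖(S.orthogonalProjectionOnto x : EuclideanSpace ℝ (Fin n))‖ ≤ ‖x‖ := by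
      calc ‖(S.orthogonalProjectionOnto x : EuclideanSpace ℝ (Fin n))‖ ≤ ‖S.orthogonalProjectionOnto‖ * ‖x‖ :=
            (S.orthogonalProjectionOnto).le_opNorm x
        _ ≤ 1 * ‖x‖ := by
            exact mul_le_mul_of_nonneg_right (Submodule.orthogonalProjectionOnto_norm_le S) (norm_nonneg _)
        _ = ‖x‖ := one_mul _
    have hxnorm : ‖x‖ ^ 2 = ∑ i, (B i j - Matrix.diagonal σ i j) ^ 2 := by
      rw [← real_inner_self_eq_norm_sq, PiLp.inner_apply]
      simp [pow_two, hx]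
    calc σ j ^ 2 * t j = ‖(S.orthogonalProjectionOnto x : EuclideanSpace ℝ (Fin n))‖ ^ 2 := hnormP.symm
      _ ≤ ‖x‖ ^ 2 := by
          exact pow_le_pow_left₀ (norm_nonneg _) hle 2
      _ = _ := hxnorm
  have hrankle : (n : ℝ) - k ≤ ∑ j, t j := by
    rw [hsum]
    have h1 : finrank ℝ Scol ≤ k := hrank ▸ hB
    have : (n : ℝ) = (finrank ℝ Scol : ℝ) + finrank ℝ S := by exact_mod_cast hdim.symm
    rw [this]
    have : (finrank ℝ Scol : ℝ) ≤ k := by exact_mod_cast h1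
    linarith
  calc (∑ i : Fin n, if k ≤ (i : ℕ) then σ i ^ 2 else 0)
      ≤ ∑ i, σ i ^ 2 * t i := majorize hk σ t hnn hmono ht0 ht1 hrankle
    _ ≤ _ := Finset.sum_le_sum fun j _ => hcolbound j

theorem eckart_young_frobenius {n k : ℕ} (hk : k ≤ n)
    (U V W : Matrix (Fin n) (Fin n) ℝ) (σ : Fin n → ℝ)
    (hU : U * U.transpose = 1) (hV : V * V.transpose = 1)
    (hσ_nonneg : ∀ i, 0 ≤ σ i)
    (hσ_mono : ∀ i j : Fin n, i ≤ j → σ j ≤ σ i)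
    (hW : W = U * Matrix.diagonal σ * V.transpose)
    (Cstar : Matrix (Fin n) (Fin n) ℝ)
    (hCstar : Cstar =
      U * Matrix.diagonal (fun i : Fin n => if (i : ℕ) < k then σ i else 0) * V.transpose) :
    Cstar.rank ≤ k ∧
      (∀ C : Matrix (Fin n) (Fin n) ℝ, C.rank ≤ k →
        frobSq (Cstar - W) ≤ frobSq (C - W)) ∧
      frobSq (Cstar - W) = ∑ i : Fin n, (if k ≤ (i : ℕ) then σ i ^ 2 else (0:ℝ)) := by
  classical
  have hU' : Uᵀ * U = 1 := mul_eq_one_comm.mp hU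
  have hV' : Vᵀ * V = 1 := mul_eq_one_comm.mp hV
  -- part 1
  have hrank : Cstar.rank ≤ k := by
    rw [hCstar]
    refine (Matrix.rank_mul_le_left _ _).trans ((Matrix.rank_mul_le_right _ _).trans ?_)
    rw [Matrix.rank_diagonal]
    have hmono' : ∀ i : Fin n, ((if (i : ℕ) < k then σ i else 0) ≠ 0) → ((i : ℕ) < k) := by
      intro i h
      by_contra hc
      simp [hc] at h
    calc Fintype.card {i : Fin n // (if (i : ℕ) < k then σ i else 0) ≠ 0}
        ≤ Fintype.card {i : Fin n // (i : ℕ) < k} := Fintype.card_subtype_mono _ _ hmono'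
      _ = k := by
          rw [Fintype.card_subtype]
          exact card_filter_lt hk
  -- part 3 : the value
  have hdiff : Cstar - W =
      U * Matrix.diagonal (fun i : Fin n => (if (i : ℕ) < k then σ i else 0) - σ i) * Vᵀ := by
    rw [hCstar, hW, ← Matrix.sub_mul, ← Matrix.mul_sub, Matrix.diagonal_sub]
  have hval : frobSq (Cstar - W) = ∑ i : Fin n, (if k ≤ (i : ℕ) then σ i ^ 2 else (0:ℝ)) := by
    rw [hdiff, frobSq_conj U V hU hV]
    rw [frobSq]
    have hdiag : ∀ i j : Fin n,
        (Matrix.diagonal (fun i : Fin n => (if (i : ℕ) < k then σ i else 0) - σ i)) i j ^ 2 =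
          if i = j then (if k ≤ (i : ℕ) then σ i ^ 2 else 0) else 0 := by
      intro i j
      by_cases h : i = j
      · subst h
        simp only [Matrix.diagonal_apply_eq, if_true]
        by_cases h2 : (i : ℕ) < k
        · simp [h2, Nat.not_le.mpr h2]
        · simp [h2, Nat.le_of_not_lt h2]
      · simp [Matrix.diagonal_apply_ne _ h, h]
    simp only [hdiag]
    simp [Finset.sum_ite_eq]
  refine ⟨hrank, ?_, hval⟩
  -- part 2 : minimality
  intro C hC
  rw [hval]
  set B : Matrix (Fin n) (Fin n) ℝ := Uᵀ * C * V with hB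
  have hBrank : B.rank ≤ k := by
    refine (Matrix.rank_mul_le_left _ _).trans ((Matrix.rank_mul_le_right _ _).trans hC)
  have hCeq : C = U * B * Vᵀ := by
    rw [hB]
    calc C = (U * Uᵀ) * C * (V * Vᵀ) := by rw [hU, hV, Matrix.one_mul, Matrix.mul_one]
      _ = U * (Uᵀ * C * V) * Vᵀ := by simp only [Matrix.mul_assoc]
  have hCW : C - W = U * (B - Matrix.diagonal σ) * Vᵀ := by
    rw [hCeq, hW, ← Matrix.sub_mul, ← Matrix.mul_sub]
  rw [hCW, frobSq_conj U V hU hV]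
  have := core_lemma hk σ hσ_nonneg hσ_mono B hBrank
  calc (∑ i : Fin n, if k ≤ (i : ℕ) then σ i ^ 2 else (0:ℝ))
      ≤ ∑ j, ∑ i, (B i j - Matrix.diagonal σ i j) ^ 2 := this
    _ = frobSq (B - Matrix.diagonal σ) := by
        rw [frobSq]
        rw [Finset.sum_comm]
        simp [Matrix.sub_apply]
end
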